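/- arXiv:1711.06638 — 9 statements merged into one kernel-verified Lean document; each statement's English description precedes it below -/
import Mathlib

section
/- Let (X, d) be a metric space with at least three points and let δ : X → ℝ be a function with δ(x) ≤ underline(d)(x) for all x ∈ X. Then the drifted map d_δ is a pseudometric on X: it is nonnegative, symmetric, vanishes on the diagonal, and satisfies the triangle inequality. -/
open scoped Classical

/-- The Gromov product `d(x; y, z) = (d(x,y) + d(x,z) - d(y,z))/2`. -/
noncomputable def gromov {X : Type*} (d : X → X → ℝ) (x y z : X) : ℝ :=
  (d x y + d x z - d y z) / 2

/-- `underline d x` is the infimum of the Gromov products `d(x; y, z)` over all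
pairs of distinct points `y, z` different from `x`. -/
noncomputable def underline {X : Type*} (d : X → X → ℝ) (x : X) : ℝ :=
  sInf {r : ℝ | ∃ y z : X, y ≠ x ∧ z ≠ x ∧ y ≠ z ∧ r = gromov d x y z}

/-- The drifted map `d_δ`: `d_δ(x,x) = 0` and `d_δ(x,y) = d(x,y) - δ(x) - δ(y)` for `x ≠ y`. -/
noncomputable def drift {X : Type*} (d : X → X → ℝ) (δ : X → ℝ) (x y : X) : ℝ :=
  if x = y then 0 else d x y - δ x - δ y

lemma underline_le_gromov {X : Type*} [MetricSpace X] (x y z : X)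
    (hy : y ≠ x) (hz : z ≠ x) (hyz : y ≠ z) :
    underline (fun a b => dist a b) x ≤ gromov (fun a b => dist a b) x y z := by
  apply csInf_le
  · refine ⟨0, ?_⟩
    rintro r ⟨y', z', _, _, _, rfl⟩
    have := dist_triangle y' x z'
    simp only [gromov]
    rw [dist_comm y' x] at this
    linarith
  · exact ⟨y, z, hy, hz, hyz, rfl⟩

lemma exists_third {X : Type*} (h3 : ∃ a b c : X, a ≠ b ∧ a ≠ c ∧ b ≠ c)
    (x y : X) : ∃ z : X, z ≠ x ∧ z ≠ y := by
  obtain ⟨a, b, c, hab, hac, hbc⟩ := h3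
  by_contra h
  push_neg at h
  have hall : ∀ z : X, z = x ∨ z = y := fun z => or_iff_not_imp_left.mpr (h z)
  rcases hall a with rfl | rfl <;> rcases hall b with h' | h' <;>
    rcases hall c with h'' | h'' <;> subst_vars <;> simp_all

theorem stmt1 {X : Type*} [MetricSpace X]
    (h3 : ∃ a b c : X, a ≠ b ∧ a ≠ c ∧ b ≠ c)
    (δ : X → ℝ) (hδ : ∀ x : X, δ x ≤ underline (fun a b => dist a b) x) :
    (∀ x y : X, 0 ≤ drift (fun a b => dist a b) δ x y) ∧
    (∀ x y : X, drift (fun a b => dist a b) δ x y = drift (fun a b => dist a b) δ y x) ∧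
    (∀ x : X, drift (fun a b => dist a b) δ x x = 0) ∧
    (∀ x y z : X, drift (fun a b => dist a b) δ x z ≤
      drift (fun a b => dist a b) δ x y + drift (fun a b => dist a b) δ y z) := by
  have key : ∀ x y z : X, y ≠ x → z ≠ x → y ≠ z →
      δ x ≤ gromov (fun a b => dist a b) x y z := fun x y z hy hz hyz =>
    (hδ x).trans (underline_le_gromov x y z hy hz hyz)
  have sum_le : ∀ x y : X, x ≠ y → δ x + δ y ≤ dist x y := by
    intro x y hxy
    obtain ⟨z, hzx, hzy⟩ := exists_third h3 x y
    have h1 := key x y z (Ne.symm hxy) hzx (Ne.symm hzy)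
    have h2 := key y x z hxy hzy (Ne.symm hzx)
    simp only [gromov] at h1 h2
    rw [dist_comm y x] at h2
    linarith
  have nonneg : ∀ x y : X, 0 ≤ drift (fun a b => dist a b) δ x y := by
    intro x y
    unfold drift
    split
    · exact le_refl 0
    case _ hxy => have := sum_le x y hxy; linarith
  have symm : ∀ x y : X, drift (fun a b => dist a b) δ x y
      = drift (fun a b => dist a b) δ y x := by
    intro x y
    unfold drift
    rcases eq_or_ne x y with rfl | hxy
    · simp
    · rw [if_neg hxy, if_neg (Ne.symm hxy)]
      show dist x y - δ x - δ y = dist y x - δ y - δ x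
      rw [dist_comm]; ring
  refine ⟨nonneg, symm, fun x => by simp [drift], ?_⟩
  intro x y z
  rcases eq_or_ne x y with rfl | hxy
  · simp [drift]
  rcases eq_or_ne y z with rfl | hyz
  · simp [drift]
  rcases eq_or_ne x z with rfl | hxz
  · have h1 := nonneg x y
    have h2 := nonneg y x
    simp only [drift, if_pos rfl, if_true, if_neg hxy, if_neg hyz]
    simp only [drift, if_neg hxy] at h1
    simp only [drift, if_neg hyz] at h2
    linarith
  · have hg := key y x z hxy (Ne.symm hyz) hxz
    simp only [gromov] at hg
    simp only [drift, if_neg hxy, if_neg hyz, if_neg hxz]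
    rw [dist_comm y x] at hg
    linarith
end

section
/- Let (X, d) be a metric space with at least three points and let δ : X → ℝ be a function with δ(x) ≤ underline(d)(x) for all x ∈ X. Then for every x ∈ X, the infimum over all pairs of distinct points y, z ∈ X \ {x} of the Gromov product d_δ(x; y, z) = (d_δ(x, y) + d_δ(x, z) − d_δ(y, z))/2 equals underline(d)(x) − δ(x). In particular, for δ = underline(d) the pseudometric d⁻ = d_δ is trim: all these infima are 0. -/
open scoped Classical

private lemma sInf_sub_const (S : Set ℝ) (hne : S.Nonempty) (hbdd : BddBelow S) (c : ℝ) :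
    sInf ((fun r => r - c) '' S) = sInf S - c := by
  obtain ⟨b, hb⟩ := hbdd
  have hbddT : BddBelow ((fun r => r - c) '' S) := by
    refine ⟨b - c, ?_⟩
    rintro t ⟨s, hs, rfl⟩
    exact sub_le_sub_right (hb hs) c
  apply le_antisymm
  · rw [le_sub_iff_add_le]
    refine le_csInf hne fun s hs => ?_
    have : sInf ((fun r => r - c) '' S) ≤ s - c := csInf_le hbddT ⟨s, hs, rfl⟩
    linarith
  · refine le_csInf (hne.image _) ?_
    rintro t ⟨s, hs, rfl⟩
    exact sub_le_sub_right (csInf_le ⟨b, hb⟩ hs) c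

private lemma key {X : Type*} [MetricSpace X]
    (h3 : ∃ a b c : X, a ≠ b ∧ a ≠ c ∧ b ≠ c) (δ : X → ℝ) (x : X) :
    underline (drift (fun a b => dist a b) δ) x =
      underline (fun a b => dist a b) x - δ x := by
  set S : Set ℝ := {r : ℝ | ∃ y z : X, y ≠ x ∧ z ≠ x ∧ y ≠ z ∧
      r = gromov (fun a b => dist a b) x y z} with hS
  have hne : S.Nonempty := by
    obtain ⟨a, b, c, hab, hac, hbc⟩ := h3
    by_cases hxa : a = x
    · exact ⟨_, b, c, by simp [← hxa, hab.symm], by simp [← hxa, hac.symm], hbc, rfl⟩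
    · by_cases hxb : b = x
      · exact ⟨_, a, c, hxa, by simp [← hxb, hbc.symm], hac, rfl⟩
      · exact ⟨_, a, b, hxa, hxb, hab, rfl⟩
  have hbdd : BddBelow S := by
    refine ⟨0, fun r hr => ?_⟩
    obtain ⟨y, z, _, _, _, rfl⟩ := hr
    have := dist_triangle y x z
    simp only [gromov]
    rw [dist_comm y x] at this
    linarith
  have himg : {r : ℝ | ∃ y z : X, y ≠ x ∧ z ≠ x ∧ y ≠ z ∧
      r = gromov (drift (fun a b => dist a b) δ) x y z} = (fun r => r - δ x) '' S := by
    ext r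
    constructor
    · rintro ⟨y, z, hy, hz, hyz, rfl⟩
      refine ⟨gromov (fun a b => dist a b) x y z, ⟨y, z, hy, hz, hyz, rfl⟩, ?_⟩
      simp only [gromov, drift, if_neg (Ne.symm hy), if_neg (Ne.symm hz), if_neg hyz]
      ring
    · rintro ⟨s, ⟨y, z, hy, hz, hyz, rfl⟩, rfl⟩
      refine ⟨y, z, hy, hz, hyz, ?_⟩
      simp only [gromov, drift, if_neg (Ne.symm hy), if_neg (Ne.symm hz), if_neg hyz]
      ring
  rw [underline, himg, sInf_sub_const S hne hbdd, underline]

theorem stmt2 {X : Type*} [MetricSpace X]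
    (h3 : ∃ a b c : X, a ≠ b ∧ a ≠ c ∧ b ≠ c)
    (δ : X → ℝ) (hδ : ∀ x : X, δ x ≤ underline (fun a b => dist a b) x) :
    (∀ x : X, underline (drift (fun a b => dist a b) δ) x =
      underline (fun a b => dist a b) x - δ x) ∧
    (∀ x : X,
      underline (drift (fun a b => dist a b) (underline (fun a b => dist a b))) x = 0) := by
  refine ⟨fun x => key h3 δ x, fun x => ?_⟩
  rw [key h3 (underline (fun a b => dist a b)) x, sub_self]
end

section
/- Let A be a type with at least two elements (with decidable equality) and let n ≥ 2. Consider X = (Fin n → A) with the Hamming distance d (the number of coordinates at which two tuples differ). Then X is trim: for every x ∈ X, the infimum over all pairs of distinct y, z ∈ X \ {x} of the Gromov product (d(x, y) + d(x, z) − d(y, z))/2 equals 0. -/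
lemma hamming_update_one {A : Type*} [DecidableEq A] {n : ℕ} (x : Fin n → A)
    (i : Fin n) {a : A} (ha : a ≠ x i) :
    hammingDist (Function.update x i a) x = 1 := by
  unfold hammingDist
  rw [show (Finset.univ.filter fun j => Function.update x i a j ≠ x j) = {i} from ?_]
  · simp
  · ext j
    simp only [Finset.mem_filter, Finset.mem_univ, true_and, Finset.mem_singleton,
      Function.update_apply]
    constructor
    · intro h; by_contra hj; simp [hj] at h
    · intro h; subst h; simpa using ha

lemma hamming_updates_two {A : Type*} [DecidableEq A] {n : ℕ} (x : Fin n → A)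
    {i j : Fin n} (hij : i ≠ j) {a b : A} (ha : a ≠ x i) (hb : b ≠ x j) :
    hammingDist (Function.update x i a) (Function.update x j b) = 2 := by
  unfold hammingDist
  rw [show (Finset.univ.filter fun k =>
      Function.update x i a k ≠ Function.update x j b k) = {i, j} from ?_]
  · rw [Finset.card_insert_of_notMem (by simpa using hij)]; simp
  · ext k
    simp only [Finset.mem_filter, Finset.mem_univ, true_and, Finset.mem_insert,
      Finset.mem_singleton, Function.update_apply]
    rcases eq_or_ne k i with rfl | hki <;> rcases eq_or_ne k j with rfl | hkj
    · exact absurd rfl hij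
    · simp [hij, ha, Ne.symm hij]
    · simp [hki, Ne.symm hb]
    · simp [hki, hkj]

/-- The space of tuples `Fin n → A` (`n ≥ 2`, `A` with at least two elements) with the
Hamming distance is trim. -/
theorem stmt4 {A : Type*} [DecidableEq A] (hA : ∃ a b : A, a ≠ b)
    {n : ℕ} (hn : 2 ≤ n) (x : Fin n → A) :
    underline (fun y z : Fin n → A => (hammingDist y z : ℝ)) x = 0 := by
  obtain ⟨a, b, hab⟩ := hA
  set i : Fin n := ⟨0, by omega⟩
  set j : Fin n := ⟨1, by omega⟩
  have hij : i ≠ j := by simp [i, j, Fin.ext_iff]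
  have pick : ∀ c : A, ∃ a' : A, a' ≠ c := by
    intro c
    rcases eq_or_ne a c with rfl | h
    · exact ⟨b, Ne.symm hab⟩
    · exact ⟨a, h⟩
  obtain ⟨a', ha'⟩ := pick (x i)
  obtain ⟨b', hb'⟩ := pick (x j)
  set y : Fin n → A := Function.update x i a'
  set z : Fin n → A := Function.update x j b'
  have hyx : y ≠ x := fun h => ha' (by rw [← congrFun h i]; simp [y])
  have hzx : z ≠ x := fun h => hb' (by rw [← congrFun h j]; simp [z])
  have hyz : y ≠ z := fun h => by
    have := congrFun h i
    simp [y, z, Function.update_apply, hij] at this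
    exact ha' this
  have hd1 : hammingDist y x = 1 := hamming_update_one x i ha'
  have hd2 : hammingDist z x = 1 := hamming_update_one x j hb'
  have hd3 : hammingDist y z = 2 := hamming_updates_two x hij ha' hb'
  have hmem : (0 : ℝ) ∈ {r : ℝ | ∃ y z : Fin n → A, y ≠ x ∧ z ≠ x ∧ y ≠ z ∧
      r = gromov (fun y z : Fin n → A => (hammingDist y z : ℝ)) x y z} := by
    refine ⟨y, z, hyx, hzx, hyz, ?_⟩
    simp [gromov, hammingDist_comm x y, hammingDist_comm x z, hd1, hd2, hd3]
    norm_num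
  have hbdd : ∀ r ∈ {r : ℝ | ∃ y z : Fin n → A, y ≠ x ∧ z ≠ x ∧ y ≠ z ∧
      r = gromov (fun y z : Fin n → A => (hammingDist y z : ℝ)) x y z}, (0:ℝ) ≤ r := by
    rintro r ⟨u, v, _, _, _, rfl⟩
    have := hammingDist_triangle u x v
    unfold gromov
    have h : (hammingDist u v : ℝ) ≤ hammingDist x u + hammingDist x v := by
      rw [hammingDist_comm x u]
      exact_mod_cast this
    linarith
  unfold underline
  exact le_antisymm (csInf_le ⟨0, hbdd⟩ hmem) (le_csInf ⟨0, hmem⟩ hbdd)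
end

section
/- Let ((X_k, d_k), p_k, u_k) be a trimming sequence and let x, y ∈ X_0 be distinct points such that x_{(k)} = y_{(k)} for some k. Let m be the smallest such index (necessarily m ≥ 1). Then d_0(x, y) = σ^m(x) + σ^m(y). -/
/-- The trimming sequence of a point: `traj p x 0 = x` and `traj p x (k+1) = p k (traj p x k)`. -/
def traj {X : ℕ → Type*} (p : ∀ k, X k → X (k + 1)) (x : X 0) : ∀ k, X k
  | 0 => x
  | k + 1 => p k (traj p x k)

theorem stmt5 {X : ℕ → Type*} [∀ k, MetricSpace (X k)]
    (p : ∀ k, X k → X (k + 1)) (u : ∀ k, X k → ℝ)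
    (hsurj : ∀ k, Function.Surjective (p k))
    (hu : ∀ k (x : X k), 0 ≤ u k x)
    (ha : ∀ k (x y : X k), p k x ≠ p k y →
      dist (p k x) (p k y) = dist x y - u k x - u k y)
    (hb : ∀ k (x y : X k), x ≠ y → p k x = p k y → dist x y = u k x + u k y)
    (x y : X 0) (hxy : x ≠ y) (m : ℕ)
    (hm : traj p x m = traj p y m)
    (hmin : ∀ j, traj p x j = traj p y j → m ≤ j) :
    dist x y = (∑ k ∈ Finset.range m, u k (traj p x k)) +
      (∑ k ∈ Finset.range m, u k (traj p y k)) := by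
  have key : ∀ j, j ≤ m → dist (traj p x j) (traj p y j) =
      dist x y - (∑ k ∈ Finset.range j, u k (traj p x k)) -
        (∑ k ∈ Finset.range j, u k (traj p y k)) := by
    intro j
    induction j with
    | zero => intro _; simp [traj]
    | succ n ih =>
      intro hn
      have hn' : n ≤ m := Nat.le_of_succ_le hn
      have hne : traj p x n ≠ traj p y n := by
        intro h
        have := hmin n h
        omega
      have step : dist (traj p x (n + 1)) (traj p y (n + 1)) =
          dist (traj p x n) (traj p y n) - u n (traj p x n) - u n (traj p y n) := by
        by_cases hp : p n (traj p x n) = p n (traj p y n)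
        · have hb' := hb n _ _ hne hp
          show dist (p n (traj p x n)) (p n (traj p y n)) = _
          rw [hp, dist_self, hb']
          ring
        · exact ha n _ _ hp
      rw [step, ih hn', Finset.sum_range_succ, Finset.sum_range_succ]
      ring
  have h0 := key m le_rfl
  rw [hm, dist_self] at h0
  linarith
end

section
/- Let ((X_k, d_k), p_k, u_k) be a trimming sequence and let x, y ∈ X_0 be points with x_{(k)} ≠ y_{(k)} for all k. Then both series Σ_{k=0}^{∞} u_k(x_{(k)}) and Σ_{k=0}^{∞} u_k(y_{(k)}) converge, the nonincreasing sequence (d_k(x_{(k)}, y_{(k)}))_k converges, and d_0(x, y) = lim_{k→∞} d_k(x_{(k)}, y_{(k)}) + σ(x) + σ(y). -/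
theorem stmt6 {X : ℕ → Type*} [∀ k, MetricSpace (X k)]
    (p : ∀ k, X k → X (k + 1)) (u : ∀ k, X k → ℝ)
    (hsurj : ∀ k, Function.Surjective (p k))
    (hu : ∀ k (x : X k), 0 ≤ u k x)
    (ha : ∀ k (x y : X k), p k x ≠ p k y →
      dist (p k x) (p k y) = dist x y - u k x - u k y)
    (hb : ∀ k (x y : X k), x ≠ y → p k x = p k y → dist x y = u k x + u k y)
    (x y : X 0) (hxy : ∀ k, traj p x k ≠ traj p y k) :
    Summable (fun k => u k (traj p x k)) ∧
    Summable (fun k => u k (traj p y k)) ∧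
    (∀ k, dist (traj p x (k + 1)) (traj p y (k + 1)) ≤ dist (traj p x k) (traj p y k)) ∧
    ∃ L : ℝ, Filter.Tendsto (fun k => dist (traj p x k) (traj p y k))
        Filter.atTop (nhds L) ∧
      dist x y = L + (∑' k, u k (traj p x k)) + (∑' k, u k (traj p y k)) := by
  set f : ℕ → ℝ := fun k => u k (traj p x k) + u k (traj p y k) with hf
  have hne : ∀ k, p k (traj p x k) ≠ p k (traj p y k) := fun k h => hxy (k + 1) h
  have hkey : ∀ k, dist (traj p x (k + 1)) (traj p y (k + 1))
      = dist (traj p x k) (traj p y k) - u k (traj p x k) - u k (traj p y k) :=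
    fun k => ha k _ _ (hne k)
  have hDn : ∀ n, dist (traj p x n) (traj p y n)
      = dist x y - ∑ k ∈ Finset.range n, f k := by
    intro n
    induction n with
    | zero => simp [traj]
    | succ n ih =>
      rw [hkey n, ih, Finset.sum_range_succ]
      simp only [hf]; ring
  have hfpos : ∀ k, 0 ≤ f k := fun k => add_nonneg (hu _ _) (hu _ _)
  have hbound : ∀ n, ∑ k ∈ Finset.range n, f k ≤ dist x y := by
    intro n
    have h := dist_nonneg (x := traj p x n) (y := traj p y n)
    rw [hDn n] at h; linarith
  have hsumf : Summable f := summable_of_sum_range_le hfpos hbound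
  have hsx : Summable (fun k => u k (traj p x k)) :=
    hsumf.of_nonneg_of_le (fun k => hu _ _) (fun k => le_add_of_nonneg_right (hu _ _))
  have hsy : Summable (fun k => u k (traj p y k)) :=
    hsumf.of_nonneg_of_le (fun k => hu _ _) (fun k => le_add_of_nonneg_left (hu _ _))
  refine ⟨hsx, hsy, ?_, ?_⟩
  · intro k
    rw [hkey k]
    have h1 := hu k (traj p x k); have h2 := hu k (traj p y k); linarith
  · refine ⟨dist x y - ∑' k, f k, ?_, ?_⟩
    · have h1 : Filter.Tendsto (fun n => ∑ k ∈ Finset.range n, f k)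
          Filter.atTop (nhds (∑' k, f k)) := hsumf.hasSum.tendsto_sum_nat
      have h2 := h1.const_sub (dist x y)
      exact h2.congr fun n => (hDn n).symm
    · have h3 : ∑' k, f k = (∑' k, u k (traj p x k)) + ∑' k, u k (traj p y k) :=
        Summable.tsum_add hsx hsy
      rw [h3]; ring
end

section
/- Let ((X_k, d_k), p_k, u_k) be a trimming sequence. If there exist x₀, y₀ ∈ X_0 with (x₀)_{(k)} ≠ (y₀)_{(k)} for all k, then for every x ∈ X_0 the series σ(x) = Σ_{k=0}^{∞} u_k(x_{(k)}) converges. -/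
lemma traj_dist_eq {X : ℕ → Type*} [∀ k, MetricSpace (X k)]
    (p : ∀ k, X k → X (k + 1)) (u : ∀ k, X k → ℝ)
    (ha : ∀ k (x y : X k), p k x ≠ p k y →
      dist (p k x) (p k y) = dist x y - u k x - u k y)
    (a b : X 0) (h : ∀ k, traj p a k ≠ traj p b k) :
    ∀ n, dist (traj p a n) (traj p b n)
      = dist a b - (∑ k ∈ Finset.range n, u k (traj p a k))
        - (∑ k ∈ Finset.range n, u k (traj p b k)) := by
  intro n
  induction n with
  | zero => simp [traj]
  | succ n ih =>
      have step : dist (traj p a (n + 1)) (traj p b (n + 1))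
          = dist (traj p a n) (traj p b n) - u n (traj p a n) - u n (traj p b n) :=
        ha n (traj p a n) (traj p b n) (h (n + 1))
      rw [step, ih, Finset.sum_range_succ, Finset.sum_range_succ]
      ring

lemma summable_of_sep {X : ℕ → Type*} [∀ k, MetricSpace (X k)]
    (p : ∀ k, X k → X (k + 1)) (u : ∀ k, X k → ℝ)
    (hu : ∀ k (x : X k), 0 ≤ u k x)
    (ha : ∀ k (x y : X k), p k x ≠ p k y →
      dist (p k x) (p k y) = dist x y - u k x - u k y)
    (a b : X 0) (h : ∀ k, traj p a k ≠ traj p b k) :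
    Summable (fun k => u k (traj p a k)) := by
  apply summable_of_sum_range_le (c := dist a b) (fun n => hu n _)
  intro n
  have := traj_dist_eq p u ha a b h n
  have h1 : (0:ℝ) ≤ dist (traj p a n) (traj p b n) := dist_nonneg
  have h2 : (0:ℝ) ≤ ∑ k ∈ Finset.range n, u k (traj p b k) :=
    Finset.sum_nonneg fun k _ => hu k _
  linarith

theorem stmt7 {X : ℕ → Type*} [∀ k, MetricSpace (X k)]
    (p : ∀ k, X k → X (k + 1)) (u : ∀ k, X k → ℝ)
    (hsurj : ∀ k, Function.Surjective (p k))
    (hu : ∀ k (x : X k), 0 ≤ u k x)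
    (ha : ∀ k (x y : X k), p k x ≠ p k y →
      dist (p k x) (p k y) = dist x y - u k x - u k y)
    (hb : ∀ k (x y : X k), x ≠ y → p k x = p k y → dist x y = u k x + u k y)
    (hsep : ∃ x₀ y₀ : X 0, ∀ k, traj p x₀ k ≠ traj p y₀ k) :
    ∀ x : X 0, Summable (fun k => u k (traj p x k)) := by
  obtain ⟨x₀, y₀, hxy⟩ := hsep
  have S0 : Summable (fun k => u k (traj p x₀ k)) :=
    summable_of_sep p u hu ha x₀ y₀ hxy
  intro x
  by_cases h : ∀ k, traj p x k ≠ traj p x₀ k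
  · exact summable_of_sep p u hu ha x x₀ h
  · push_neg at h
    obtain ⟨N, hN⟩ := h
    have heq : ∀ m, N ≤ m → traj p x m = traj p x₀ m := by
      intro m hm
      induction m, hm using Nat.le_induction with
      | base => exact hN
      | succ m _ ih => show p _ _ = p _ _; rw [ih]
    rw [← summable_nat_add_iff N]
    have : (fun k => u (k + N) (traj p x (k + N)))
        = (fun k => u (k + N) (traj p x₀ (k + N))) := by
      funext k; rw [heq (k + N) (Nat.le_add_left N k)]
    rw [this]
    exact ((summable_nat_add_iff N).mpr S0 : _)
end

section
/- Let I be a set equipped with a pseudometric e, and for each i ∈ I let (L_i, ρ_i) be a pseudometric space together with a function σ_i : L_i → ℝ with σ_i ≥ 0 such that |σ_i(a) − σ_i(b)| ≤ ρ_i(a, b) ≤ σ_i(a) + σ_i(b) for all a, b ∈ L_i. Define ρ on the disjoint union ⨿_{i∈I} L_i by: ρ(a, b) = ρ_i(a, b) if a, b ∈ L_i, and ρ(a, b) = e(i, j) + σ_i(a) + σ_j(b) if a ∈ L_i, b ∈ L_j with i ≠ j. Then ρ is a pseudometric on ⨿_{i∈I} L_i. -/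
theorem stmt9 {I : Type*} (e : I → I → ℝ)
    (he0 : ∀ i, e i i = 0) (hesymm : ∀ i j, e i j = e j i)
    (henn : ∀ i j, 0 ≤ e i j)
    (hetri : ∀ i j k, e i k ≤ e i j + e j k)
    {L : I → Type*} (ρ : ∀ i, L i → L i → ℝ)
    (hρ0 : ∀ i (a : L i), ρ i a a = 0)
    (hρsymm : ∀ i (a b : L i), ρ i a b = ρ i b a)
    (hρnn : ∀ i (a b : L i), 0 ≤ ρ i a b)
    (hρtri : ∀ i (a b c : L i), ρ i a c ≤ ρ i a b + ρ i b c)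
    (σ : ∀ i, L i → ℝ) (hσnn : ∀ i (a : L i), 0 ≤ σ i a)
    (hσ : ∀ i (a b : L i), |σ i a - σ i b| ≤ ρ i a b ∧ ρ i a b ≤ σ i a + σ i b)
    (R : (Σ i, L i) → (Σ i, L i) → ℝ)
    (hRsame : ∀ i (a b : L i), R ⟨i, a⟩ ⟨i, b⟩ = ρ i a b)
    (hRdiff : ∀ i j (a : L i) (b : L j), i ≠ j →
      R ⟨i, a⟩ ⟨j, b⟩ = e i j + σ i a + σ j b) :
    (∀ a, R a a = 0) ∧ (∀ a b, R a b = R b a) ∧ (∀ a b, 0 ≤ R a b) ∧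
    (∀ a b c, R a c ≤ R a b + R b c) := by
  have hd : ∀ i (a b : L i), σ i a - σ i b ≤ ρ i a b := by
    intro i a b
    linarith [le_abs_self (σ i a - σ i b), (hσ i a b).1]
  refine ⟨?_, ?_, ?_, ?_⟩
  · rintro ⟨i, a⟩
    rw [hRsame, hρ0]
  · rintro ⟨i, a⟩ ⟨j, b⟩
    by_cases h : i = j
    · subst h; rw [hRsame, hRsame, hρsymm]
    · rw [hRdiff _ _ _ _ h, hRdiff _ _ _ _ (Ne.symm h), hesymm]; ring
  · rintro ⟨i, a⟩ ⟨j, b⟩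
    by_cases h : i = j
    · subst h; rw [hRsame]; exact hρnn _ _ _
    · rw [hRdiff _ _ _ _ h]
      have := henn i j; have := hσnn i a; have := hσnn j b; linarith
  · rintro ⟨i, a⟩ ⟨j, b⟩ ⟨k, c⟩
    by_cases hij : i = j
    · subst hij
      by_cases hjk : i = k
      · subst hjk; rw [hRsame, hRsame, hRsame]; exact hρtri _ _ _ _
      · rw [hRsame, hRdiff _ _ _ _ hjk, hRdiff _ _ _ _ hjk]
        have := hd i a b; linarith
    · by_cases hjk : j = k
      · subst hjk
        rw [hRdiff _ _ _ _ hij, hRdiff _ _ _ _ hij, hRsame]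
        have := hd j c b; have := hρsymm j b c; linarith
      · by_cases hik : i = k
        · subst hik
          rw [hRsame, hRdiff _ _ _ _ hij, hRdiff _ _ _ _ hjk]
          have := (hσ i a c).2; have := henn i j; have := henn j i
          have := hσnn j b; linarith
        · rw [hRdiff _ _ _ _ hik, hRdiff _ _ _ _ hij, hRdiff _ _ _ _ hjk]
          have := hetri i j k; have := hσnn j b; linarith
end

section
/- Let ((X_k, d_k), p_k, u_k) be a trimming sequence such that there exist x₀, y₀ ∈ X_0 with (x₀)_{(k)} ≠ (y₀)_{(k)} for all k (so that σ(x) converges for every x ∈ X_0). Define e : X_0 × X_0 → ℝ by e(x, y) = lim_{k→∞} d_k(x_{(k)}, y_{(k)}) (the limit of a nonincreasing nonnegative sequence). Then e is a pseudometric on X_0, and the map Φ(f) = f + σ is a bijection from T(X_0, e) onto the set τ = {g ∈ T(X_0, d_0) : σ^n(x) ≤ g(x) for all n ∈ ℕ and all x ∈ X_0}, preserving the sup-distance: d_T(Φ(f₁), Φ(f₂)) = d_T(f₁, f₂) for all f₁, f₂ ∈ T(X_0, e). -/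
/-- The tight span of a pseudometric `d` on `X`. -/
def TightSpan {X : Type*} (d : X → X → ℝ) : Set (X → ℝ) :=
  {f | (∀ x, 0 ≤ f x) ∧ (∀ x y, d x y ≤ f x + f y) ∧
    ∀ x, ∀ ε : ℝ, 0 < ε → ∃ y, f x + f y ≤ d x y + ε}

/-- The sup-distance on the tight span: `dT f g = sup_x |f x - g x|`. -/
noncomputable def dT {X : Type*} (f g : X → ℝ) : ℝ :=
  ⨆ x, |f x - g x|

theorem stmt18 {X : ℕ → Type*} [∀ k, MetricSpace (X k)]
    (p : ∀ k, X k → X (k + 1)) (u : ∀ k, X k → ℝ)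
    (hsurj : ∀ k, Function.Surjective (p k))
    (hu : ∀ k (x : X k), 0 ≤ u k x)
    (ha : ∀ k (x y : X k), p k x ≠ p k y →
      dist (p k x) (p k y) = dist x y - u k x - u k y)
    (hb : ∀ k (x y : X k), x ≠ y → p k x = p k y → dist x y = u k x + u k y)
    (hsep : ∃ x₀ y₀ : X 0, ∀ k, traj p x₀ k ≠ traj p y₀ k)
    (σ : X 0 → ℝ) (hσ : ∀ x, σ x = ∑' k, u k (traj p x k))
    (e : X 0 → X 0 → ℝ)
    (he : ∀ x y : X 0, Filter.Tendsto (fun k => dist (traj p x k) (traj p y k))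
      Filter.atTop (nhds (e x y))) :
    ((∀ x, e x x = 0) ∧ (∀ x y, e x y = e y x) ∧ (∀ x y, 0 ≤ e x y) ∧
      (∀ x y z, e x z ≤ e x y + e y z)) ∧
    (∀ f ∈ TightSpan e,
        (fun x => f x + σ x) ∈ TightSpan (fun x y : X 0 => dist x y) ∧
        ∀ (n : ℕ) (x : X 0),
          (∑ k ∈ Finset.range n, u k (traj p x k)) ≤ f x + σ x) ∧
    (∀ f₁ ∈ TightSpan e, ∀ f₂ ∈ TightSpan e,
        (fun x => f₁ x + σ x) = (fun x => f₂ x + σ x) → f₁ = f₂) ∧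
    (∀ g ∈ TightSpan (fun x y : X 0 => dist x y),
        (∀ (n : ℕ) (x : X 0), (∑ k ∈ Finset.range n, u k (traj p x k)) ≤ g x) →
        ∃ f ∈ TightSpan e, g = fun x => f x + σ x) ∧
    (∀ f₁ ∈ TightSpan e, ∀ f₂ ∈ TightSpan e,
        dT (fun x => f₁ x + σ x) (fun x => f₂ x + σ x) = dT f₁ f₂) := by
  obtain ⟨x₀, y₀, hxy₀⟩ := hsep
  have htraj : ∀ (x : X 0) (k : ℕ), traj p x (k + 1) = p k (traj p x k) := fun _ _ => rfl
  -- merge stability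
  have hmerge : ∀ (x y : X 0) (n m : ℕ), n ≤ m → traj p x n = traj p y n →
      traj p x m = traj p y m := by
    intro x y n m hnm h
    induction m with
    | zero => obtain rfl := Nat.le_zero.mp hnm; exact h
    | succ m ih =>
      rcases Nat.lt_or_ge m n with hlt | hge
      · have : n = m + 1 := by omega
        subst this; exact h
      · rw [htraj, htraj, ih hge]
  -- key identity while trajectories stay distinct
  have hL3 : ∀ (x y : X 0) (n : ℕ), traj p x n ≠ traj p y n →
      dist (traj p x n) (traj p y n)
        = dist x y - (∑ k ∈ Finset.range n, u k (traj p x k))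
            - (∑ k ∈ Finset.range n, u k (traj p y k)) := by
    intro x y n
    induction n with
    | zero => intro _; simp [traj]
    | succ n ih =>
      intro h
      have hne : traj p x n ≠ traj p y n := by
        intro hc
        exact h (by rw [htraj, htraj, hc])
      have hA := ha n (traj p x n) (traj p y n) (by rw [← htraj, ← htraj]; exact h)
      rw [Finset.sum_range_succ, Finset.sum_range_succ, htraj, htraj, hA, ih hne]
      ring
  -- monotone quantity: dist x y ≤ D n + s x n + s y n
  have hL2 : ∀ (x y : X 0) (n : ℕ), dist x y ≤
      dist (traj p x n) (traj p y n) + (∑ k ∈ Finset.range n, u k (traj p x k))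
        + (∑ k ∈ Finset.range n, u k (traj p y k)) := by
    intro x y n
    induction n with
    | zero => simp [traj]
    | succ n ih =>
      refine ih.trans ?_
      rw [Finset.sum_range_succ, Finset.sum_range_succ, htraj, htraj]
      by_cases hxy : traj p x n = traj p y n
      · have e1 : dist (traj p x n) (traj p y n) = 0 := by rw [hxy, dist_self]
        have e2 : dist (p n (traj p x n)) (p n (traj p y n)) = 0 := by
          rw [hxy, dist_self]
        have := hu n (traj p x n); have := hu n (traj p y n)
        linarith
      · by_cases hp : p n (traj p x n) = p n (traj p y n)
        · have hB := hb n (traj p x n) (traj p y n) hxy hp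
          have e2 : dist (p n (traj p x n)) (p n (traj p y n)) = 0 := by
            rw [hp, dist_self]
          linarith
        · have hA := ha n (traj p x n) (traj p y n) hp
          linarith
  -- summability
  have hbdd : ∀ x y : X 0, (∀ n, traj p x n ≠ traj p y n) →
      Summable (fun k => u k (traj p x k)) := by
    intro x y h
    apply summable_of_sum_range_le (fun k => hu k _)
    intro n
    have h3 := hL3 x y n (h n)
    have hd : (0:ℝ) ≤ dist (traj p x n) (traj p y n) := dist_nonneg
    have hy : (0:ℝ) ≤ ∑ k ∈ Finset.range n, u k (traj p y k) :=
      Finset.sum_nonneg fun k _ => hu k _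
    linarith
  have hsum : ∀ x : X 0, Summable (fun k => u k (traj p x k)) := by
    intro x
    by_cases h : ∀ n, traj p x n ≠ traj p x₀ n
    · exact hbdd x x₀ h
    · push_neg at h
      obtain ⟨n, hn⟩ := h
      have h₀ : Summable (fun k => u k (traj p x₀ k)) := hbdd x₀ y₀ hxy₀
      have h₁ : Summable (fun k => u (k + n) (traj p x₀ (k + n))) :=
        (summable_nat_add_iff n).2 h₀
      have h₂ : (fun k => u (k + n) (traj p x (k + n)))
          = (fun k => u (k + n) (traj p x₀ (k + n))) := by
        funext k
        rw [hmerge x x₀ n (k + n) (Nat.le_add_left n k) hn]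
      exact (summable_nat_add_iff n).1 (by rw [h₂]; exact h₁)
  have htend : ∀ x : X 0,
      Filter.Tendsto (fun n => ∑ k ∈ Finset.range n, u k (traj p x k))
        Filter.atTop (nhds (σ x)) := by
    intro x
    rw [hσ x]
    exact (hsum x).hasSum.tendsto_sum_nat
  have hσ_nonneg : ∀ x, 0 ≤ σ x := by
    intro x; rw [hσ x]; exact tsum_nonneg (fun k => hu k _)
  have hs_le : ∀ (x : X 0) (n : ℕ),
      (∑ k ∈ Finset.range n, u k (traj p x k)) ≤ σ x := by
    intro x n; rw [hσ x]
    exact Summable.sum_le_tsum _ (fun k _ => hu k _) (hsum x)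
  -- e is a pseudometric
  have he_self : ∀ x, e x x = 0 := by
    intro x
    refine tendsto_nhds_unique (he x x) ?_
    simpa using (tendsto_const_nhds : Filter.Tendsto (fun _ : ℕ => (0:ℝ)) _ (nhds 0))
  have hsymm : ∀ x y, e x y = e y x := by
    intro x y
    refine tendsto_nhds_unique (he x y) ?_
    exact (he y x).congr (fun k => dist_comm _ _)
  have hnn : ∀ x y, 0 ≤ e x y := fun x y =>
    ge_of_tendsto' (he x y) (fun k => dist_nonneg)
  have htri : ∀ x y z, e x z ≤ e x y + e y z := fun x y z =>
    le_of_tendsto_of_tendsto' (he x z) ((he x y).add (he y z))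
      (fun k => dist_triangle _ _ _)
  -- e when trajectories never merge
  have he_never : ∀ x y : X 0, (∀ n, traj p x n ≠ traj p y n) →
      e x y = dist x y - σ x - σ y := by
    intro x y h
    refine tendsto_nhds_unique (he x y) ?_
    have hT : Filter.Tendsto
        (fun n => dist x y - (∑ k ∈ Finset.range n, u k (traj p x k))
          - (∑ k ∈ Finset.range n, u k (traj p y k)))
        Filter.atTop (nhds (dist x y - σ x - σ y)) :=
      (tendsto_const_nhds.sub (htend x)).sub (htend y)
    exact hT.congr (fun n => (hL3 x y n (h n)).symm)
  -- e vanishes upon merging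
  have he_merge : ∀ (x y : X 0) (n : ℕ), traj p x n = traj p y n → e x y = 0 := by
    intro x y n h
    refine tendsto_nhds_unique (he x y) ?_
    refine Filter.Tendsto.congr' ?_
      (tendsto_const_nhds : Filter.Tendsto (fun _ : ℕ => (0:ℝ)) _ _)
    exact Filter.eventually_atTop.2
      ⟨n, fun m hm => by
        show (0:ℝ) = dist (traj p x m) (traj p y m)
        rw [hmerge x y n m hm h, dist_self]⟩
  -- fundamental inequality
  have hI1 : ∀ x y : X 0, dist x y ≤ e x y + σ x + σ y := by
    intro x y
    refine ge_of_tendsto' (((he x y).add (htend x)).add (htend y)) (fun n => ?_)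
    exact hL2 x y n
  -- an escape point for each x
  have hw : ∀ x : X 0, ∃ w, ∀ n, traj p x n ≠ traj p w n := by
    intro x
    by_cases h : ∀ n, traj p x n ≠ traj p x₀ n
    · exact ⟨x₀, h⟩
    · push_neg at h
      obtain ⟨n, hn⟩ := h
      refine ⟨y₀, fun m hm => ?_⟩
      have h1 := hmerge x x₀ n (max n m) (le_max_left _ _) hn
      have h2 := hmerge x y₀ m (max n m) (le_max_right _ _) hm
      exact hxy₀ (max n m) (h1.symm.trans h2)
  -- 1-Lipschitz property of tight span elements
  have hLip : ∀ f ∈ TightSpan e, ∀ x y : X 0, f y ≤ f x + e x y := by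
    intro f hf x y
    obtain ⟨hf0, hf1, hf2⟩ := hf
    refine le_of_forall_pos_le_add ?_
    intro ε hε
    obtain ⟨z, hz⟩ := hf2 y ε hε
    have h1 := htri y x z
    have h2 := hf1 x z
    have h3 := hsymm y x
    linarith
  refine ⟨⟨he_self, hsymm, hnn, htri⟩, ?_, ?_, ?_, ?_⟩
  · -- Φ f ∈ TightSpan d₀ and the bound
    intro f hf
    obtain ⟨hf0, hf1, hf2⟩ := hf
    constructor
    · refine ⟨fun x => ?_, fun x y => ?_, fun x ε hε => ?_⟩
      · show (0:ℝ) ≤ f x + σ x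
        have := hf0 x; have := hσ_nonneg x; linarith
      · show dist x y ≤ (f x + σ x) + (f y + σ y)
        have := hf1 x y; have := hI1 x y; linarith
      · obtain ⟨y, hy⟩ := hf2 x (ε / 2) (by linarith)
        by_cases hcase : ∀ n, traj p x n ≠ traj p y n
        · refine ⟨y, ?_⟩
          show (f x + σ x) + (f y + σ y) ≤ dist x y + ε
          have h1 := he_never x y hcase
          linarith
        · push_neg at hcase
          obtain ⟨n, hn⟩ := hcase
          have hfx : f x ≤ ε / 2 := by
            have h0 := he_merge x y n hn
            have := hf0 y
            linarith
          obtain ⟨w, hw'⟩ := hw x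
          refine ⟨w, ?_⟩
          show (f x + σ x) + (f w + σ w) ≤ dist x w + ε
          have h1 := he_never x w hw'
          have h2 := hLip f ⟨hf0, hf1, hf2⟩ x w
          linarith
    · intro n x
      have := hs_le x n; have := hf0 x; linarith
  · -- injectivity
    intro f₁ _ f₂ _ hΦ
    funext x
    have := congrFun hΦ x
    linarith
  · -- surjectivity
    intro g hg hgs
    obtain ⟨hg0, hg1, hg2⟩ := hg
    have hσg : ∀ x, σ x ≤ g x := fun x =>
      le_of_tendsto' (htend x) (fun n => hgs n x)
    refine ⟨fun x => g x - σ x, ⟨fun x => ?_, fun x y => ?_, fun x ε hε => ?_⟩, ?_⟩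
    · show (0:ℝ) ≤ g x - σ x
      have := hσg x; linarith
    · show e x y ≤ (g x - σ x) + (g y - σ y)
      by_cases hcase : ∀ n, traj p x n ≠ traj p y n
      · have := he_never x y hcase
        have := hg1 x y
        linarith
      · push_neg at hcase
        obtain ⟨n, hn⟩ := hcase
        have := he_merge x y n hn
        have := hσg x; have := hσg y
        linarith
    · obtain ⟨y, hy⟩ := hg2 x ε hε
      refine ⟨y, ?_⟩
      show (g x - σ x) + (g y - σ y) ≤ e x y + ε
      have := hI1 x y
      linarith
    · funext x; ring
  · -- isometry
    intro f₁ _ f₂ _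
    simp [dT, add_sub_add_right_eq_sub]
end

section
/- Let ((X_k, d_k), p_k, u_k) be a trimming sequence with X_0 nonempty such that: for all x, y ∈ X_0 there exists k with x_{(k)} = y_{(k)}; u_k vanishes identically on X_k whenever X_k has at most one point; and the series σ(x) = Σ_{k=0}^{∞} u_k(x_{(k)}) converges for every x ∈ X_0. Then σ ∈ T(X_0, d_0), and σ is the unique element of T(X_0, d_0) majorating all partial sums: any g ∈ T(X_0, d_0) with σ^n(x) ≤ g(x) for all n ∈ ℕ and all x ∈ X_0 equals σ. -/
/-- Once two trajectories agree, they agree forever. -/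
lemma traj_persist {X : ℕ → Type*} (p : ∀ k, X k → X (k + 1)) {x y : X 0} {j k : ℕ}
    (hjk : j ≤ k) (h : traj p x j = traj p y j) : traj p x k = traj p y k := by
  induction k, hjk using Nat.le_induction with
  | base => exact h
  | succ n hn ih => show p n (traj p x n) = p n (traj p y n); rw [ih]

/-- Surjectivity of the composite maps. -/
lemma traj_surj {X : ℕ → Type*} (p : ∀ k, X k → X (k + 1))
    (hsurj : ∀ k, Function.Surjective (p k)) :
    ∀ m, Function.Surjective (fun x : X 0 => traj p x m)
  | 0 => fun a => ⟨a, rfl⟩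
  | m + 1 => fun a => by
      obtain ⟨b, hb⟩ := hsurj m a
      obtain ⟨x, hx⟩ := traj_surj p hsurj m b
      exact ⟨x, by show p m (traj p x m) = a; rw [show traj p x m = b from hx, hb]⟩

/-- Subsingleton-ness persists along a surjective system. -/
lemma sub_persist {X : ℕ → Type*} (p : ∀ k, X k → X (k + 1))
    (hsurj : ∀ k, Function.Surjective (p k)) {m : ℕ}
    (hm : ∀ a b : X m, a = b) : ∀ k, m ≤ k → ∀ a b : X k, a = b := by
  intro k hk
  induction k, hk using Nat.le_induction with
  | base => exact hm
  | succ n hn ih =>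
      intro a b
      obtain ⟨a', ha⟩ := hsurj n a
      obtain ⟨b', hb⟩ := hsurj n b
      rw [← ha, ← hb, ih a' b']

theorem stmt19 {X : ℕ → Type*} [∀ k, MetricSpace (X k)]
    [Nonempty (X 0)]
    (p : ∀ k, X k → X (k + 1)) (u : ∀ k, X k → ℝ)
    (hsurj : ∀ k, Function.Surjective (p k))
    (hu : ∀ k (x : X k), 0 ≤ u k x)
    (ha : ∀ k (x y : X k), p k x ≠ p k y →
      dist (p k x) (p k y) = dist x y - u k x - u k y)
    (hb : ∀ k (x y : X k), x ≠ y → p k x = p k y → dist x y = u k x + u k y)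
    (hmeet : ∀ x y : X 0, ∃ k, traj p x k = traj p y k)
    (hvanish : ∀ k, (∀ a b : X k, a = b) → ∀ a : X k, u k a = 0)
    (hconv : ∀ x : X 0, Summable (fun k => u k (traj p x k)))
    (σ : X 0 → ℝ) (hσ : ∀ x, σ x = ∑' k, u k (traj p x k)) :
    σ ∈ TightSpan (fun x y : X 0 => dist x y) ∧
    ∀ g ∈ TightSpan (fun x y : X 0 => dist x y),
      (∀ (n : ℕ) (x : X 0), (∑ k ∈ Finset.range n, u k (traj p x k)) ≤ g x) →
      g = σ := by
  classical
  -- distance formula at the minimal meeting time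
  have dist_eq : ∀ (x y : X 0), x ≠ y → ∀ M : ℕ, traj p x M = traj p y M →
      (∀ j < M, traj p x j ≠ traj p y j) →
      dist x y = ∑ k ∈ Finset.range M, (u k (traj p x k) + u k (traj p y k)) := by
    intro x y hxy M hM hmin
    obtain ⟨N, rfl⟩ : ∃ N, M = N + 1 := by
      cases M with
      | zero => exact absurd hM hxy
      | succ N => exact ⟨N, rfl⟩
    have key : ∀ j, j ≤ N →
        dist x y = (∑ k ∈ Finset.range j, (u k (traj p x k) + u k (traj p y k)))
          + dist (traj p x j) (traj p y j) := by
      intro j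
      induction j with
      | zero => intro _; simp [traj]
      | succ j ih =>
          intro hj
          have hj' : j ≤ N := Nat.le_of_succ_le hj
          have hne : traj p x (j + 1) ≠ traj p y (j + 1) := hmin (j + 1) (by omega)
          have hstep := ha j (traj p x j) (traj p y j) hne
          have hih := ih hj'
          rw [Finset.sum_range_succ]
          have h1 : dist (traj p x (j + 1)) (traj p y (j + 1)) =
              dist (traj p x j) (traj p y j) - u j (traj p x j) - u j (traj p y j) := hstep
          linarith
    have h1 := key N le_rfl
    have hNne : traj p x N ≠ traj p y N := hmin N (Nat.lt_succ_self N)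
    have hps : p N (traj p x N) = p N (traj p y N) := hM
    have h2 := hb N _ _ hNne hps
    rw [Finset.sum_range_succ]
    linarith
  -- key relation: σ x + σ y = dist x y + 2 * tail
  have main : ∀ (x y : X 0), x ≠ y → ∀ M : ℕ, traj p x M = traj p y M →
      (∀ j < M, traj p x j ≠ traj p y j) →
      σ x + σ y = dist x y + 2 * ∑' k, u (k + M) (traj p x (k + M)) := by
    intro x y hxy M hM hmin
    have hx := Summable.sum_add_tsum_nat_add (f := fun k => u k (traj p x k)) M (hconv x)
    have hy := Summable.sum_add_tsum_nat_add (f := fun k => u k (traj p y k)) M (hconv y)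
    have htail : (∑' k, u (k + M) (traj p y (k + M)))
        = ∑' k, u (k + M) (traj p x (k + M)) := by
      apply tsum_congr
      intro k
      rw [traj_persist p (Nat.le_add_left M k) hM.symm]
    have hd := dist_eq x y hxy M hM hmin
    rw [Finset.sum_add_distrib] at hd
    rw [hσ x, hσ y, ← hx, ← hy, htail]
    linarith
  -- tail monotonicity
  have tail_mono : ∀ (x : X 0) (m M : ℕ), m ≤ M →
      (∑' k, u (k + M) (traj p x (k + M))) ≤ ∑' k, u (k + m) (traj p x (k + m)) := by
    intro x m M hmM
    have hg : Summable (fun k => u (k + m) (traj p x (k + m))) :=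
      (summable_nat_add_iff m).mpr (hconv x)
    have hsplit := Summable.sum_add_tsum_nat_add
      (f := fun k => u (k + m) (traj p x (k + m))) (M - m) hg
    have hrw : (∑' i, u (i + (M - m) + m) (traj p x (i + (M - m) + m)))
        = ∑' k, u (k + M) (traj p x (k + M)) := by
      apply tsum_congr; intro i
      have hidx : i + (M - m) + m = i + M := by omega
      rw [hidx]
    have hsum0 : (0:ℝ) ≤ ∑ i ∈ Finset.range (M - m),
        u (i + m) (traj p x (i + m)) :=
      Finset.sum_nonneg fun i _ => hu _ _
    rw [hrw] at hsplit
    linarith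
  have tail_nonneg : ∀ (x : X 0) (M : ℕ),
      (0:ℝ) ≤ ∑' k, u (k + M) (traj p x (k + M)) :=
    fun x M => tsum_nonneg fun k => hu _ _
  have σ_nonneg : ∀ x : X 0, 0 ≤ σ x := fun x => by
    rw [hσ x]; exact tsum_nonneg fun k => hu _ _
  -- property (i)
  have prop1 : ∀ x y : X 0, dist x y ≤ σ x + σ y := by
    intro x y
    by_cases hxy : x = y
    · subst hxy; simp [dist_self]; linarith [σ_nonneg x]
    · set M := Nat.find (hmeet x y) with hMdef
      have hM : traj p x M = traj p y M := Nat.find_spec (hmeet x y)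
      have hmin : ∀ j < M, traj p x j ≠ traj p y j := fun j hj => Nat.find_min _ hj
      have := main x y hxy M hM hmin
      linarith [tail_nonneg x M]
  -- picking a distinct point
  have pick : ∀ (ℓ : ℕ) (z : X ℓ), (¬ ∀ a b : X ℓ, a = b) → ∃ c : X ℓ, c ≠ z := by
    intro ℓ z h
    push_neg at h
    obtain ⟨a, b, hab⟩ := h
    by_cases hz : a = z
    · exact ⟨b, fun hbz => hab (hz.trans hbz.symm)⟩
    · exact ⟨a, hz⟩
  -- property (ii)
  have prop2 : ∀ (x : X 0) (ε : ℝ), 0 < ε → ∃ y, σ x + σ y ≤ dist x y + ε := by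
    intro x ε hε
    by_cases hS : ∃ k, ∀ a b : X k, a = b
    · -- some level is a singleton
      set m0 := Nat.find hS with hm0def
      have hsub : ∀ a b : X m0, a = b := Nat.find_spec hS
      have hall : ∀ k, m0 ≤ k → ∀ a b : X k, a = b := sub_persist p hsurj hsub
      cases hm0 : m0 with
      | zero =>
          refine ⟨x, ?_⟩
          have hσ0 : σ x = 0 := by
            rw [hσ x]
            rw [show (fun k => u k (traj p x k)) = fun _ => (0:ℝ) from
              funext fun k => hvanish k (hall k (by omega)) _]
            exact tsum_zero
          simp [dist_self, hσ0]; linarith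
      | succ n =>
          have hn : ¬ ∀ a b : X n, a = b := Nat.find_min hS (by omega)
          obtain ⟨c, hc⟩ := pick n (traj p x n) hn
          obtain ⟨y, hy⟩ := traj_surj p hsurj n c
          have hyc : traj p y n = c := hy
          have hne : traj p x n ≠ traj p y n := by rw [hyc]; exact fun h => hc h.symm
          have hxy : x ≠ y := fun h => hne (by rw [h])
          set M := Nat.find (hmeet x y) with hMdef
          have hM : traj p x M = traj p y M := Nat.find_spec (hmeet x y)
          have hmin : ∀ j < M, traj p x j ≠ traj p y j := fun j hj => Nat.find_min _ hj
          have hnM : n < M := by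
            by_contra h
            exact hne (traj_persist p (by omega) hM)
          have htail0 : (∑' k, u (k + M) (traj p x (k + M))) = 0 := by
            rw [show (fun k => u (k + M) (traj p x (k + M))) = fun _ => (0:ℝ) from
              funext fun k => hvanish _ (hall (k + M) (by omega)) _]
            exact tsum_zero
          refine ⟨y, ?_⟩
          have := main x y hxy M hM hmin
          rw [htail0] at this
          linarith
    · -- every level has at least two points
      -- choose m with small tail
      have htendsto := (hconv x).hasSum.tendsto_sum_nat
      have hev : ∀ᶠ m in Filter.atTop,
          σ x - ε / 2 < ∑ k ∈ Finset.range m, u k (traj p x k) := by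
        apply htendsto.eventually
        apply eventually_gt_nhds
        rw [hσ x] at *
        linarith
      obtain ⟨m, hm⟩ := hev.exists
      have hsplit := Summable.sum_add_tsum_nat_add (f := fun k => u k (traj p x k)) m (hconv x)
      have htailm : (∑' k, u (k + m) (traj p x (k + m))) < ε / 2 := by
        rw [hσ x] at hm; linarith
      obtain ⟨c, hc⟩ := pick m (traj p x m) (fun h => hS ⟨m, h⟩)
      obtain ⟨y, hy⟩ := traj_surj p hsurj m c
      have hyc : traj p y m = c := hy
      have hne : traj p x m ≠ traj p y m := by rw [hyc]; exact fun h => hc h.symm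
      have hxy : x ≠ y := fun h => hne (by rw [h])
      set M := Nat.find (hmeet x y) with hMdef
      have hM : traj p x M = traj p y M := Nat.find_spec (hmeet x y)
      have hmin : ∀ j < M, traj p x j ≠ traj p y j := fun j hj => Nat.find_min _ hj
      have hmM : m ≤ M := by
        by_contra h
        exact hne (traj_persist p (by omega) hM)
      refine ⟨y, ?_⟩
      have := main x y hxy M hM hmin
      have := tail_mono x m M hmM
      linarith
  refine ⟨⟨σ_nonneg, prop1, prop2⟩, ?_⟩
  intro g hg hpartial
  obtain ⟨hg0, hg1, hg2⟩ := hg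
  funext x
  have hle : σ x ≤ g x := by
    have h1 := (hconv x).hasSum.tendsto_sum_nat
    rw [← hσ x] at h1
    exact le_of_tendsto' h1 fun n => hpartial n x
  have hge : g x ≤ σ x := by
    by_contra h
    push_neg at h
    obtain ⟨y, hy⟩ := hg2 x ((g x - σ x) / 2) (by linarith)
    have h1 : σ y ≤ g y := by
      have h2 := (hconv y).hasSum.tendsto_sum_nat
      rw [← hσ y] at h2
      exact le_of_tendsto' h2 fun n => hpartial n y
    have h3 := prop1 x y
    linarith
  linarith
end
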